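/- Let p be a polynomial, f a polynomial vector field, rem₀ = p, and let rem_{i+1} be the remainder of the polynomial reduction (multivariate division) of the Lie derivative (rem_i)' by {rem₀, rem₁, …, rem_i}. Then for all i ≥ 1 there exist polynomials α_{ij} such that rem_i = p^(i) − Σ_{j=0}^{i−1} α_{ij} · p^(j). In particular, rem_i ≡ p^(i) modulo the ideal ⟨p, p', …, p^(i−1)⟩. -/

import Mathlib

noncomputable def lieDeriv {n : ℕ} (f : Fin n → MvPolynomial (Fin n) ℝ)
    (p : MvPolynomial (Fin n) ℝ) : MvPolynomial (Fin n) ℝ :=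
  ∑ i : Fin n, MvPolynomial.pderiv i p * f i

lemma lieDeriv_sub {n : ℕ} (f : Fin n → MvPolynomial (Fin n) ℝ)
    (a b : MvPolynomial (Fin n) ℝ) :
    lieDeriv f (a - b) = lieDeriv f a - lieDeriv f b := by
  simp [lieDeriv, sub_mul, Finset.sum_sub_distrib]

lemma lieDeriv_mul {n : ℕ} (f : Fin n → MvPolynomial (Fin n) ℝ)
    (a b : MvPolynomial (Fin n) ℝ) :
    lieDeriv f (a * b) = lieDeriv f a * b + a * lieDeriv f b := by
  unfold lieDeriv
  rw [Finset.sum_mul, Finset.mul_sum, ← Finset.sum_add_distrib]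
  refine Finset.sum_congr rfl fun k _ => ?_
  rw [MvPolynomial.pderiv_mul]; ring

lemma lieDeriv_add {n : ℕ} (f : Fin n → MvPolynomial (Fin n) ℝ)
    (a b : MvPolynomial (Fin n) ℝ) :
    lieDeriv f (a + b) = lieDeriv f a + lieDeriv f b := by
  simp [lieDeriv, add_mul, Finset.sum_add_distrib]

lemma lieDeriv_sum {n : ℕ} (f : Fin n → MvPolynomial (Fin n) ℝ)
    (s : Finset ℕ) (g : ℕ → MvPolynomial (Fin n) ℝ) :
    lieDeriv f (∑ j ∈ s, g j) = ∑ j ∈ s, lieDeriv f (g j) := by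
  classical
  induction s using Finset.induction with
  | empty => simp [lieDeriv]
  | insert _ _ h ih => rw [Finset.sum_insert h, Finset.sum_insert h, lieDeriv_add, ih]

lemma mem_span_iter_iff {n : ℕ} (f : Fin n → MvPolynomial (Fin n) ℝ)
    (p : MvPolynomial (Fin n) ℝ) (i : ℕ) (x : MvPolynomial (Fin n) ℝ) :
    x ∈ Ideal.span ((fun j => (lieDeriv f)^[j] p) '' {j | j < i}) ↔
      ∃ α : ℕ → MvPolynomial (Fin n) ℝ,
        x = ∑ j ∈ Finset.range i, α j * (lieDeriv f)^[j] p := by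
  constructor
  · intro hx
    induction hx using Submodule.span_induction with
    | mem y hy =>
      obtain ⟨j, hj, rfl⟩ := hy
      refine ⟨fun k => if k = j then 1 else 0, ?_⟩
      rw [Finset.sum_eq_single j]
      · simp
      · intro b _ hb; simp [hb]
      · intro h; exact absurd (Finset.mem_range.2 hj) h
    | zero => exact ⟨0, by simp⟩
    | add y z _ _ hy hz =>
      obtain ⟨a, rfl⟩ := hy; obtain ⟨b, rfl⟩ := hz
      exact ⟨a + b, by simp [add_mul, Finset.sum_add_distrib]⟩
    | smul r y _ hy =>
      obtain ⟨a, rfl⟩ := hy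
      exact ⟨fun j => r * a j, by simp [Finset.mul_sum, smul_eq_mul, mul_assoc]⟩
  · rintro ⟨α, rfl⟩
    refine Ideal.sum_mem _ ?_
    intro j hj
    exact Ideal.mul_mem_left _ _ (Ideal.subset_span ⟨j, Finset.mem_range.1 hj, rfl⟩)

lemma lieDeriv_mem_span {n : ℕ} (f : Fin n → MvPolynomial (Fin n) ℝ)
    (p : MvPolynomial (Fin n) ℝ) (i : ℕ) (x : MvPolynomial (Fin n) ℝ)
    (hx : x ∈ Ideal.span ((fun j => (lieDeriv f)^[j] p) '' {j | j < i})) :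
    lieDeriv f x ∈ Ideal.span ((fun j => (lieDeriv f)^[j] p) '' {j | j < i + 1}) := by
  rw [mem_span_iter_iff] at hx
  obtain ⟨α, rfl⟩ := hx
  rw [lieDeriv_sum]
  have hc : ∑ j ∈ Finset.range i, lieDeriv f (α j * (lieDeriv f)^[j] p)
      = ∑ j ∈ Finset.range i,
        (lieDeriv f (α j) * (lieDeriv f)^[j] p + α j * (lieDeriv f)^[j + 1] p) :=
    Finset.sum_congr rfl fun j _ => by
      rw [lieDeriv_mul, Function.iterate_succ_apply']
  rw [hc]
  refine Ideal.sum_mem _ fun j hj => ?_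
  have hj' := Finset.mem_range.1 hj
  refine Ideal.add_mem _ ?_ ?_
  · exact Ideal.mul_mem_left _ _ (Ideal.subset_span ⟨j, Set.mem_setOf.mpr (by omega), rfl⟩)
  · exact Ideal.mul_mem_left _ _ (Ideal.subset_span ⟨j + 1, Set.mem_setOf.mpr (by omega), rfl⟩)

lemma rem_sub_mem {n : ℕ}
    (f : Fin n → MvPolynomial (Fin n) ℝ) (p : MvPolynomial (Fin n) ℝ)
    (rem : ℕ → MvPolynomial (Fin n) ℝ)
    (hrem0 : rem 0 = p)
    (hrem : ∀ i : ℕ, ∃ β : ℕ → MvPolynomial (Fin n) ℝ,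
      rem (i + 1) = lieDeriv f (rem i) - ∑ j ∈ Finset.range (i + 1), β j * rem j) :
    ∀ i : ℕ, rem i - (lieDeriv f)^[i] p ∈
      Ideal.span ((fun j => (lieDeriv f)^[j] p) '' {j | j < i}) := by
  intro i
  induction i using Nat.strong_induction_on with
  | _ i ih =>
    match i with
    | 0 => simp [hrem0]
    | (i + 1) =>
      obtain ⟨β, hβ⟩ := hrem i
      have hsum : ∑ j ∈ Finset.range (i + 1), β j * rem j
          = ∑ j ∈ Finset.range (i + 1),
              (β j * (rem j - (lieDeriv f)^[j] p) + β j * (lieDeriv f)^[j] p) :=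
        Finset.sum_congr rfl fun j _ => by ring
      have key : rem (i + 1) - (lieDeriv f)^[i + 1] p
          = lieDeriv f (rem i - (lieDeriv f)^[i] p)
            - ∑ j ∈ Finset.range (i + 1),
                (β j * (rem j - (lieDeriv f)^[j] p) + β j * (lieDeriv f)^[j] p) := by
        rw [hβ, lieDeriv_sub, Function.iterate_succ_apply', ← hsum]
        ring
      rw [key]
      refine Submodule.sub_mem _ ?_ (Ideal.sum_mem _ fun j hj => ?_)
      · exact lieDeriv_mem_span f p i _ (ih i (by omega))
      · have hj' := Finset.mem_range.1 hj
        refine Ideal.add_mem _ ?_ ?_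
        · refine Ideal.mul_mem_left _ _ (Ideal.span_mono ?_ (ih j (by omega)))
          refine Set.image_mono fun k hk => ?_
          simp only [Set.mem_setOf_eq] at hk ⊢; omega
        · exact Ideal.mul_mem_left _ _ (Ideal.subset_span ⟨j, Set.mem_setOf.mpr (by omega), rfl⟩)

theorem rem_eq_lie_sub_combination {n : ℕ}
    (f : Fin n → MvPolynomial (Fin n) ℝ) (p : MvPolynomial (Fin n) ℝ)
    (rem : ℕ → MvPolynomial (Fin n) ℝ)
    (hrem0 : rem 0 = p)
    (hrem : ∀ i : ℕ, ∃ β : ℕ → MvPolynomial (Fin n) ℝ,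
      rem (i + 1) = lieDeriv f (rem i) - ∑ j ∈ Finset.range (i + 1), β j * rem j) :
    ∀ i : ℕ, 1 ≤ i →
      (∃ α : ℕ → MvPolynomial (Fin n) ℝ,
        rem i = (lieDeriv f)^[i] p - ∑ j ∈ Finset.range i, α j * (lieDeriv f)^[j] p) ∧
      rem i - (lieDeriv f)^[i] p ∈
        Ideal.span ((fun j => (lieDeriv f)^[j] p) '' {j | j < i}) := by
  intro i _
  have h := rem_sub_mem f p rem hrem0 hrem i
  refine ⟨?_, h⟩
  rw [mem_span_iter_iff] at h
  obtain ⟨α, hα⟩ := h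
  refine ⟨fun j => -α j, ?_⟩
  have h2 : ∑ j ∈ Finset.range i, (fun j => -α j) j * (lieDeriv f)^[j] p
      = -∑ j ∈ Finset.range i, α j * (lieDeriv f)^[j] p := by
    rw [← Finset.sum_neg_distrib]
    exact Finset.sum_congr rfl fun j _ => by ring
  rw [h2]
  linear_combination hα
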